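/- Vertex-injective path homomorphisms that satisfy both the monotonicity condition on edges and the regularity condition form a subcategory of the category of graphs and vertex-injective monotone path homomorphisms: identities are regular and the composite of two regular monotone vertex-injective path homomorphisms is regular. -/

import Mathlib

/-- A directed graph. -/
structure DirGraph where
  V : Type
  E : Type
  src : E → V
  tgt : E → V

namespace DirGraph

/-- Finite paths from `v` to `w` in a graph. -/
inductive Path (G : DirGraph) : G.V → G.V → Type
  | nil (v : G.V) : Path G v v
  | cons (e : G.E) {w : G.V} (p : Path G (G.tgt e) w) : Path G (G.src e) w

/-- Concatenation of composable indexed paths. -/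
def Path.comp {G : DirGraph} : ∀ {a b c : G.V}, G.Path a b → G.Path b c → G.Path a c
  | _, _, _, .nil _, q => q
  | _, _, _, .cons e p, q => .cons e (p.comp q)

/-- The list of edges of a path. -/
def Path.edges {G : DirGraph} : ∀ {a b : G.V}, G.Path a b → List G.E
  | _, _, .nil _ => []
  | _, _, .cons e p => e :: p.edges

/-- The set of all finite paths of a graph (with arbitrary endpoints). -/
def FP (G : DirGraph) : Type := Σ (v : G.V) (w : G.V), G.Path v w

/-- The source (beginning) of a finite path. -/
def FP.src {G : DirGraph} (p : G.FP) : G.V := p.1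

/-- The target (end) of a finite path. -/
def FP.tgt {G : DirGraph} (p : G.FP) : G.V := p.2.1

/-- The list of edges of a finite path. -/
def FP.edges {G : DirGraph} (p : G.FP) : List G.E := p.2.2.edges

/-- The length of a finite path. -/
def FP.length {G : DirGraph} (p : G.FP) : ℕ := p.edges.length

/-- A vertex, viewed as a length-zero finite path. -/
def FP.ofVertex {G : DirGraph} (v : G.V) : G.FP := ⟨v, v, .nil v⟩

/-- An edge, viewed as a length-one finite path. -/
def FP.ofEdge {G : DirGraph} (e : G.E) : G.FP :=
  ⟨G.src e, G.tgt e, .cons e (.nil (G.tgt e))⟩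

/-- Concatenation of composable finite paths. -/
def FP.comp {G : DirGraph} (p q : G.FP) (h : p.tgt = q.src) : G.FP :=
  ⟨p.1, q.2.1, p.2.2.comp (cast (congrArg (fun x => G.Path x q.2.1) h.symm) q.2.2)⟩

/-- The prefix (extension) relation `α ⪯ β` on finite paths: `β = αγ` for some path `γ`. -/
def FP.le {G : DirGraph} (p q : G.FP) : Prop :=
  ∃ (r : G.FP) (h : p.tgt = r.src), q = p.comp r h

/-- A path homomorphism of graphs: a map on finite paths sending vertices to
vertices, intertwining the extended source and target maps, and preserving
concatenation of composable paths. -/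
def IsPathHom {G H : DirGraph} (f : G.FP → H.FP) : Prop :=
  (∀ v : G.V, ∃ w : H.V, f (FP.ofVertex v) = FP.ofVertex w) ∧
  (∀ p : G.FP, f (FP.ofVertex p.src) = FP.ofVertex (f p).src) ∧
  (∀ p : G.FP, f (FP.ofVertex p.tgt) = FP.ofVertex (f p).tgt) ∧
  (∀ (p q : G.FP) (h : p.tgt = q.src),
    ∃ h' : (f p).tgt = (f q).src, f (p.comp q h) = (f p).comp (f q) h')

/-- A map on finite paths is vertex-injective if it is injective on vertices. -/
def VertexInjective {G H : DirGraph} (f : G.FP → H.FP) : Prop :=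
  Function.Injective (fun v : G.V => f (FP.ofVertex v))

/-- The monotonicity condition on edges: `f(e) ⪯ f(e′)` implies `e = e′`. -/
def EdgeMonotone {G H : DirGraph} (f : G.FP → H.FP) : Prop :=
  ∀ e e' : G.E, FP.le (f (FP.ofEdge e)) (f (FP.ofEdge e')) → e = e'

end DirGraph

namespace DirGraph

/-- A vertex is regular if it emits at least one and only finitely many edges. -/
def RegularV (G : DirGraph) (v : G.V) : Prop :=
  {e : G.E | G.src e = v}.Finite ∧ {e : G.E | G.src e = v}.Nonempty

/-- A vertex is 0-regular if it emits exactly one edge and that edge is a loop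
at the vertex. -/
def Reg0V (G : DirGraph) (v : G.V) : Prop :=
  ∃ e : G.E, {x : G.E | G.src x = v} = {e} ∧ G.tgt e = v

/-- The image `f(s⁻¹(v))` of the set of edges emitted from `v`. -/
def EdgeImg {G H : DirGraph} (f : G.FP → H.FP) (v : G.V) : Set H.FP :=
  (fun e => f (FP.ofEdge e)) '' {e : G.E | G.src e = v}

/-- The regularity condition at a vertex `v`: `f` is injective on `s⁻¹(v)`, and
`p ∈ f(s⁻¹(v))` if and only if (i) `p` is a path of positive length, (ii) any
extension `pq ∈ f(s⁻¹(v))` has `q` trivial, and (iii) for every `i` and every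
edge `x` with the same source as the `i`-th edge of `p`, some element of
`f(s⁻¹(v))` extends `e₁…e_{i−1}x`. -/
def RegCond {G H : DirGraph} (f : G.FP → H.FP) (v : G.V) : Prop :=
  Set.InjOn (fun e => f (FP.ofEdge e)) {e : G.E | G.src e = v} ∧
  ∀ p : H.FP, p ∈ EdgeImg f v ↔
    (0 < p.length ∧
     (∀ (q : H.FP) (h : p.tgt = q.src),
        FP.comp p q h ∈ EdgeImg f v → q = FP.ofVertex p.tgt) ∧
     (∀ (i : ℕ) (hi : i < p.length) (x : H.E),
        H.src x = H.src (p.edges.get ⟨i, hi⟩) →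
        ∃ q ∈ EdgeImg f v, (p.edges.take i ++ [x]) <+: q.edges))

/-- A path homomorphism is regular if the regularity condition holds at every
regular vertex which is not 0-regular, and at every 0-regular vertex either the
regularity condition holds or `f(s⁻¹(v)) = {f(v)}`. -/
def RegularHom {G H : DirGraph} (f : G.FP → H.FP) : Prop :=
  ∀ v : G.V, RegularV G v →
    ((¬ Reg0V G v → RegCond f v) ∧
     (Reg0V G v → (RegCond f v ∨ EdgeImg f v = {f (FP.ofVertex v)})))

end DirGraph

namespace DirGraph

variable {G H K : DirGraph}

lemma Path.comp_edges : ∀ {a b c : G.V} (p : G.Path a b) (q : G.Path b c),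
    (p.comp q).edges = p.edges ++ q.edges
  | _, _, _, .nil _, q => rfl
  | _, _, _, .cons e p, q => by
      simp [Path.comp, Path.edges, Path.comp_edges p q]

lemma FP.comp_edges (p q : G.FP) (h : p.tgt = q.src) :
    (p.comp q h).edges = p.edges ++ q.edges := by
  obtain ⟨a, b, pp⟩ := p
  obtain ⟨c, d, qq⟩ := q
  have h' : b = c := h
  subst h'
  exact Path.comp_edges pp qq

@[simp] lemma FP.comp_src (p q : G.FP) (h : p.tgt = q.src) : (p.comp q h).src = p.src := rfl
@[simp] lemma FP.comp_tgt (p q : G.FP) (h : p.tgt = q.src) : (p.comp q h).tgt = q.tgt := rfl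

lemma FP.comp_length (p q : G.FP) (h : p.tgt = q.src) :
    (p.comp q h).length = p.length + q.length := by
  simp [FP.length, FP.comp_edges]

@[simp] lemma FP.ofVertex_src (v : G.V) : (FP.ofVertex v).src = v := rfl
@[simp] lemma FP.ofVertex_tgt (v : G.V) : (FP.ofVertex v).tgt = v := rfl
@[simp] lemma FP.ofVertex_edges (v : G.V) : (FP.ofVertex v).edges = [] := rfl
@[simp] lemma FP.ofEdge_src (e : G.E) : (FP.ofEdge e).src = G.src e := rfl
@[simp] lemma FP.ofEdge_tgt (e : G.E) : (FP.ofEdge e).tgt = G.tgt e := rfl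
@[simp] lemma FP.ofEdge_edges (e : G.E) : (FP.ofEdge e).edges = [e] := rfl

lemma FP.destruct (p : G.FP) :
    (p.edges = [] ∧ p = FP.ofVertex p.src ∧ p.tgt = p.src) ∨
    ∃ (e : G.E) (r : G.FP) (h : (FP.ofEdge e).tgt = r.src),
      p.edges = e :: r.edges ∧ p = (FP.ofEdge e).comp r h := by
  obtain ⟨a, b, pp⟩ := p
  cases pp with
  | nil => exact Or.inl ⟨rfl, rfl, rfl⟩
  | cons e pp' =>
    refine Or.inr ⟨e, ⟨G.tgt e, b, pp'⟩, rfl, rfl, ?_⟩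
    simp only [FP.comp, FP.ofEdge]
    rfl

lemma FP.ext_aux : ∀ (n : ℕ) (p q : G.FP), p.edges.length ≤ n →
    p.src = q.src → p.edges = q.edges → p = q := by
  intro n
  induction n with
  | zero =>
    intro p q hn h1 h2
    rcases FP.destruct p with ⟨he, hp, -⟩ | ⟨e, r, h, he, hp⟩
    · rcases FP.destruct q with ⟨he', hq, -⟩ | ⟨e', r', h', he', hq⟩
      · rw [hp, hq, h1]
      · rw [he'] at h2; rw [he] at h2; exact absurd h2 (by simp)
    · rw [he] at hn; simp at hn
  | succ n ih =>
    intro p q hn h1 h2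
    rcases FP.destruct p with ⟨he, hp, -⟩ | ⟨e, r, h, he, hp⟩
    · rcases FP.destruct q with ⟨he', hq, -⟩ | ⟨e', r', h', he', hq⟩
      · rw [hp, hq, h1]
      · rw [he', he] at h2; exact absurd h2 (by simp)
    · rcases FP.destruct q with ⟨he', hq, -⟩ | ⟨e', r', h', he', hq⟩
      · rw [he', he] at h2; exact absurd h2 (by simp)
      · rw [he, he'] at h2
        simp only [List.cons.injEq] at h2
        obtain ⟨rfl, hrr⟩ := h2
        have hr : r = r' := by
          refine ih r r' ?_ ?_ hrr
          · have := congrArg List.length he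
            simp at this; omega
          · rw [← h, ← h']
        subst hr
        rw [hp, hq]


lemma FP.ext' {p q : G.FP} (h1 : p.src = q.src) (h2 : p.edges = q.edges) : p = q :=
  FP.ext_aux p.edges.length p q le_rfl h1 h2


lemma FP.comp_ofVertex (p : G.FP) : p.comp (FP.ofVertex p.tgt) rfl = p :=
  FP.ext' rfl ((FP.comp_edges _ _ _).trans (by simp))

lemma FP.eq_ofVertex_of_length_zero {p : G.FP} (h : p.length = 0) :
    p = FP.ofVertex p.src ∧ p.tgt = p.src := by
  rcases FP.destruct p with ⟨he, hp, ht⟩ | ⟨e, r, hh, he, hp⟩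
  · exact ⟨hp, ht⟩
  · exfalso; rw [FP.length, he] at h; simp at h

lemma FP.src_head {p : G.FP} (h : 0 < p.length) :
    p.src = G.src (p.edges.get ⟨0, h⟩) := by
  rcases FP.destruct p with ⟨he, hp, ht⟩ | ⟨e, r, hh, he, hp⟩
  · rw [FP.length, he] at h; simp at h
  · have : p.edges.get ⟨0, h⟩ = e := by simp [he]
    rw [this, hp]; rfl

lemma FP.decomp : ∀ (n : ℕ) (p q : G.FP), p.edges.length ≤ n →
    p.src = q.src → p.edges <+: q.edges → ∃ (r : G.FP) (h : p.tgt = r.src), q = p.comp r h := by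
  intro n
  induction n with
  | zero =>
    intro p q hn h1 h2
    rcases FP.destruct p with ⟨he, hp, ht⟩ | ⟨e, r, hh, he, hp⟩
    · refine ⟨q, by rw [ht, h1], FP.ext' (by simp [h1]) (by simp [FP.comp_edges, he])⟩
    · rw [he] at hn; simp at hn
  | succ n ih =>
    intro p q hn h1 h2
    rcases FP.destruct p with ⟨he, hp, ht⟩ | ⟨e, r, hh, he, hp⟩
    · refine ⟨q, by rw [ht, h1], FP.ext' (by simp [h1]) (by simp [FP.comp_edges, he])⟩
    · rcases FP.destruct q with ⟨he', hq, ht'⟩ | ⟨e', r', hh', he', hq⟩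
      · rw [he', he] at h2
        exact absurd (List.eq_nil_of_prefix_nil h2) (by simp)
      · rw [he, he'] at h2
        obtain ⟨l, hl⟩ := h2
        simp only [List.cons_append, List.cons.injEq] at hl
        obtain ⟨rfl, hl⟩ := hl
        have hpre : r.edges <+: r'.edges := ⟨l, hl⟩
        have hsrc : r.src = r'.src := by rw [← hh, ← hh']
        have hlen : r.edges.length ≤ n := by
          have := congrArg List.length he; simp at this; omega
        obtain ⟨s, hs, hr'⟩ := ih r r' hlen hsrc hpre
        have hps : p.tgt = s.src := by rw [hp]; simpa using hs
        refine ⟨s, hps, FP.ext' (by simp [h1]) ?_⟩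
        rw [FP.comp_edges, he', hr', FP.comp_edges, he]
        simp

lemma FP.le_of_prefix {p q : G.FP} (h1 : p.src = q.src) (h2 : p.edges <+: q.edges) :
    FP.le p q :=
  FP.decomp p.edges.length p q le_rfl h1 h2

lemma FP.comp_assoc (p q r : G.FP) (h1 : p.tgt = q.src) (h2 : q.tgt = r.src) :
    (p.comp q h1).comp r (by simpa using h2) = p.comp (q.comp r h2) (by simpa using h1) :=
  FP.ext' rfl (by simp [FP.comp_edges])


lemma FP.ofVertex_inj {a b : G.V} (h : FP.ofVertex a = FP.ofVertex b) : a = b :=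
  congrArg FP.src h

section Hom
variable {f : G.FP → H.FP}

lemma IsPathHom.map_ofVertex (hf : IsPathHom f) (v : G.V) :
    f (FP.ofVertex v) = FP.ofVertex (f (FP.ofVertex v)).src := by
  obtain ⟨w, hw⟩ := hf.1 v
  rw [hw]; rfl

lemma IsPathHom.src_map (hf : IsPathHom f) (p : G.FP) :
    f (FP.ofVertex p.src) = FP.ofVertex (f p).src := hf.2.1 p

lemma IsPathHom.tgt_map (hf : IsPathHom f) (p : G.FP) :
    f (FP.ofVertex p.tgt) = FP.ofVertex (f p).tgt := hf.2.2.1 p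

lemma IsPathHom.src_eq (hf : IsPathHom f) {p q : G.FP} (h : p.src = q.src) :
    (f p).src = (f q).src := by
  have h1 := hf.src_map p
  have h2 := hf.src_map q
  rw [h] at h1
  exact FP.ofVertex_inj (h1.symm.trans h2)

lemma IsPathHom.map_comp (hf : IsPathHom f) (p q : G.FP) (h : p.tgt = q.src) :
    ∃ h' : (f p).tgt = (f q).src, f (p.comp q h) = (f p).comp (f q) h' := hf.2.2.2 p q h

lemma IsPathHom.length_map_comp (hf : IsPathHom f) (p q : G.FP) (h : p.tgt = q.src) :
    (f (p.comp q h)).length = (f p).length + (f q).length := by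
  obtain ⟨h', hc⟩ := hf.map_comp p q h
  rw [hc]
  exact FP.comp_length _ _ _

end Hom

lemma mem_edgeImg {f : G.FP → H.FP} {v : G.V} {p : H.FP} :
    p ∈ EdgeImg f v ↔ ∃ e : G.E, G.src e = v ∧ f (FP.ofEdge e) = p := by
  constructor
  · rintro ⟨e, he, rfl⟩; exact ⟨e, he, rfl⟩
  · rintro ⟨e, he, rfl⟩; exact ⟨e, he, rfl⟩

lemma regCond_iff (f : G.FP → H.FP) (v : G.V) :
    RegCond f v ↔
      (Set.InjOn (fun e => f (FP.ofEdge e)) {e : G.E | G.src e = v} ∧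
       ∀ p ∈ EdgeImg f v,
         0 < p.length ∧
         (∀ (q : H.FP) (h : p.tgt = q.src), FP.comp p q h ∈ EdgeImg f v →
            q = FP.ofVertex p.tgt) ∧
         (∀ (i : ℕ) (hi : i < p.length) (x : H.E),
            H.src x = H.src (p.edges.get ⟨i, hi⟩) →
            ∃ q ∈ EdgeImg f v, (p.edges.take i ++ [x]) <+: q.edges)) := by
  constructor
  · rintro ⟨hinj, hiff⟩
    exact ⟨hinj, fun p hp => (hiff p).1 hp⟩
  · rintro ⟨hinj, hmem⟩
    refine ⟨hinj, fun p => ⟨fun hp => hmem p hp, ?_⟩⟩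
    rintro ⟨h1, h2, h3⟩
    have hi : p.length - 1 < p.length := by omega
    obtain ⟨q, hq, hpre⟩ := h3 (p.length - 1) hi (p.edges.get ⟨p.length - 1, hi⟩) rfl
    have hpe : p.edges <+: q.edges := by
      have hcat : List.take (p.length - 1) p.edges ++ [p.edges.get ⟨p.length - 1, hi⟩]
          = List.take (p.length - 1 + 1) p.edges := by
        simpa [List.concat_eq_append] using List.take_concat_get p.edges (p.length - 1) hi
      rw [hcat] at hpre
      have h2' : p.length - 1 + 1 = p.edges.length := by
        simp only [FP.length] at h1 ⊢; omega
      rwa [h2', List.take_length] at hpre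
    have hq1 : 0 < q.length := (hmem q hq).1
    have hsrc : p.src = q.src := by
      rw [FP.src_head h1, FP.src_head hq1]
      congr 1
      simp only [List.get_eq_getElem]
      exact hpe.getElem (by exact h1)
    obtain ⟨r, hr, hqr⟩ := FP.le_of_prefix hsrc hpe
    have hrv := h2 r hr (hqr ▸ hq)
    subst hrv
    have : q = p := hqr.trans (FP.comp_ofVertex p)
    rwa [this] at hq

lemma regularHom_id (G : DirGraph) : RegularHom (id : G.FP → G.FP) := by
  intro v hv
  have hrc : RegCond (id : G.FP → G.FP) v := by
    rw [regCond_iff]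
    constructor
    · intro e he e' he' h
      simp only [id] at h
      have := congrArg FP.edges h
      simpa [FP.ofEdge, FP.edges, Path.edges] using this
    · rintro p hp
      obtain ⟨e, he, rfl⟩ := mem_edgeImg.1 hp
      simp only [id]
      refine ⟨by simp [FP.length], ?_, ?_⟩
      · intro q h hq
        obtain ⟨e', he', heq⟩ := mem_edgeImg.1 hq
        simp only [id] at heq
        have := congrArg FP.length heq
        rw [FP.comp_length] at this
        simp only [FP.length, FP.ofEdge_edges, List.length_singleton] at this
        have hq0 : q.length = 0 := by simp only [FP.length] at this ⊢; omega
        obtain ⟨hqv, -⟩ := FP.eq_ofVertex_of_length_zero hq0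
        rw [hqv, ← h]
      · intro i hi x hx
        have hi0 : i = 0 := by
          simp only [FP.length, FP.ofEdge_edges, List.length_singleton] at hi; omega
        subst hi0
        have hget : (FP.ofEdge e).edges.get ⟨0, hi⟩ = e := rfl
        have hxv : G.src x = v := by rw [hget] at hx; rw [hx]; exact he
        refine ⟨FP.ofEdge x, mem_edgeImg.2 ⟨x, hxv, rfl⟩, ?_⟩
        simp
  exact ⟨fun _ => hrc, fun _ => Or.inl hrc⟩


section Comp

variable {f : G.FP → H.FP} {g : H.FP → K.FP} {v : G.V}

lemma src_mem_edgeImg (hf : IsPathHom f) {p : H.FP} (hp : p ∈ EdgeImg f v) :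
    p.src = (f (FP.ofVertex v)).src := by
  obtain ⟨e, he, rfl⟩ := mem_edgeImg.1 hp
  exact hf.src_eq (p := FP.ofEdge e) (q := FP.ofVertex v) (by simp [he])

lemma srcReg (hv : RegularV G v) (hrcf : RegCond f v) {p : H.FP} (hp : p ∈ EdgeImg f v)
    (i : ℕ) (hi : i < p.length) : RegularV H (H.src (p.edges.get ⟨i, hi⟩)) := by
  have h3 := ((hrcf.2 p).1 hp).2.2
  set w := H.src (p.edges.get ⟨i, hi⟩) with hw
  classical
  let qf : H.E → H.FP := fun x => if hx : H.src x = w then (h3 i hi x hx).choose else p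
  have hq : ∀ x ∈ {x : H.E | H.src x = w}, qf x ∈ EdgeImg f v := by
    intro x hx
    have hx' : H.src x = w := hx
    simp only [qf]
    rw [dif_pos hx']
    exact (h3 i hi x hx').choose_spec.1
  have hqpre : ∀ x ∈ {x : H.E | H.src x = w}, (p.edges.take i ++ [x]) <+: (qf x).edges := by
    intro x hx
    have hx' : H.src x = w := hx
    simp only [qf]
    rw [dif_pos hx']
    exact (h3 i hi x hx').choose_spec.2
  have hilen : i < p.edges.length := hi
  have hgetx : ∀ x ∈ {x : H.E | H.src x = w}, ∃ hb : i < (qf x).edges.length,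
      (qf x).edges[i] = x := by
    intro x hx
    have hpre := hqpre x hx
    have hlen1 : (p.edges.take i ++ [x]).length = i + 1 := by
      simp [List.length_take]; omega
    have hb : i < (qf x).edges.length := by
      have := hpre.length_le; omega
    refine ⟨hb, ?_⟩
    have hg1 := hpre.getElem (i := i) (by omega)
    rw [← hg1, List.getElem_append_right (by simp [List.length_take])]
    simp [List.length_take, Nat.min_eq_left (le_of_lt hilen)]
  constructor
  · have hSfin : (EdgeImg f v).Finite := hv.1.image _
    refine Set.Finite.of_finite_image (f := qf) (hSfin.subset ?_) ?_
    · rintro q ⟨x, hx, rfl⟩; exact hq x hx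
    · intro x hx y hy hxy
      obtain ⟨hbx, hgx⟩ := hgetx x hx
      obtain ⟨hby, hgy⟩ := hgetx y hy
      rw [← hgx, ← hgy]
      congr 1
      exact congrArg FP.edges hxy
  · exact ⟨p.edges.get ⟨i, hi⟩, rfl⟩

lemma gRegCond (hg' : IsPathHom g) (hrg : RegularHom g) (w : H.V) (hw : RegularV H w)
    (x : H.E) (hx : H.src x = w) (hpos : 0 < (g (FP.ofEdge x)).length) : RegCond g w := by
  obtain ⟨c1, c2⟩ := hrg w hw
  by_cases h0 : Reg0V H w
  · rcases c2 h0 with h | h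
    · exact h
    · exfalso
      have hmem : g (FP.ofEdge x) ∈ EdgeImg g w := mem_edgeImg.2 ⟨x, hx, rfl⟩
      rw [h, Set.mem_singleton_iff] at hmem
      rw [hmem, hg'.map_ofVertex] at hpos
      simp [FP.length] at hpos
  · exact c1 h0

lemma loop_all {w : H.V} (ℓ : H.E) (hset : {x : H.E | H.src x = w} = {ℓ})
    (hloop : H.tgt ℓ = w) :
    ∀ (n : ℕ) (q : H.FP), q.edges.length ≤ n → q.src = w →
      q.edges = List.replicate q.edges.length ℓ ∧ q.tgt = w := by
  intro n
  induction n with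
  | zero =>
    intro q hn hsrc
    have he : q.edges = [] := by
      cases hq : q.edges with
      | nil => rfl
      | cons a l => rw [hq] at hn; simp at hn
    obtain ⟨hq, ht⟩ := FP.eq_ofVertex_of_length_zero (by simpa [FP.length] using he)
    exact ⟨by simp [he], ht.trans hsrc⟩
  | succ n ih =>
    intro q hn hsrc
    rcases FP.destruct q with ⟨he, hq, ht⟩ | ⟨x, r, hh, he, hq⟩
    · exact ⟨by simp [he], ht.trans hsrc⟩
    · have hxw : H.src x = w := by
        rw [hq] at hsrc; simpa using hsrc
      have hxl : x = ℓ := by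
        have : x ∈ {x : H.E | H.src x = w} := hxw
        rw [hset] at this; exact this
      subst hxl
      have hrsrc : r.src = w := by rw [← hh]; simpa using hloop
      have hrn : r.edges.length ≤ n := by
        have := congrArg List.length he; simp at this; omega
      obtain ⟨hre, hrt⟩ := ih r hrn hrsrc
      constructor
      · rw [he, hre]
        simp [List.replicate_succ, he]
      · rw [hq, FP.comp_tgt]; exact hrt

lemma poslem (hf : IsPathHom f) (hvf : VertexInjective f) (hmf : EdgeMonotone f)
    (hg' : IsPathHom g) (hrg : RegularHom g)
    (hv : RegularV G v) (hrcf : RegCond f v)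
    {p : H.FP} (hp : p ∈ EdgeImg f v) (h0 : (g p).length = 0) : Reg0V G v := by
  have hplen : 0 < p.length := ((hrcf.2 p).1 hp).1
  rcases FP.destruct p with ⟨he, -, -⟩ | ⟨x₀, r, hh, he, hpd⟩
  · rw [FP.length, he] at hplen; simp at hplen
  set w := H.src x₀ with hwdef
  have hpsrc : p.src = w := by rw [hpd]; rfl
  have hgx0 : (g (FP.ofEdge x₀)).length = 0 := by
    rw [hpd, hg'.length_map_comp] at h0
    omega
  have hw : RegularV H w := by
    have := srcReg hv hrcf hp 0 hplen
    have hget : p.edges.get ⟨0, hplen⟩ = x₀ := by simp [he]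
    rwa [hget] at this
  have hnotrc : ¬ RegCond g w := by
    intro hrc
    have hmem : g (FP.ofEdge x₀) ∈ EdgeImg g w := mem_edgeImg.2 ⟨x₀, rfl, rfl⟩
    have := ((hrc.2 _).1 hmem).1
    omega
  obtain ⟨c1, c2⟩ := hrg w hw
  by_cases h0reg : Reg0V H w
  swap
  · exact absurd (c1 h0reg) hnotrc
  obtain ⟨ℓ, hset, hloop⟩ := h0reg
  have hfw : (f (FP.ofVertex v)).src = w :=
    ((src_mem_edgeImg hf hp).symm).trans hpsrc
  have hfsrc : ∀ e : G.E, G.src e = v → (f (FP.ofEdge e)).src = w := by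
    intro e heq
    have h1 := src_mem_edgeImg hf (mem_edgeImg.2 ⟨e, heq, rfl⟩ : f (FP.ofEdge e) ∈ EdgeImg f v)
    rw [h1]; exact hfw
  have hrep : ∀ e : G.E, G.src e = v →
      (f (FP.ofEdge e)).edges = List.replicate (f (FP.ofEdge e)).edges.length ℓ ∧
      (f (FP.ofEdge e)).tgt = w := by
    intro e heq
    have := loop_all ℓ hset hloop (f (FP.ofEdge e)).edges.length (f (FP.ofEdge e)) le_rfl ?_
    · exact this
    · -- src of f(ofEdge e) as FP.src
      exact hfsrc e heq
  have htgt : ∀ e : G.E, G.src e = v → G.tgt e = v := by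
    intro e heq
    have h1 := hf.tgt_map (FP.ofEdge e)
    have h2 : (f (FP.ofEdge e)).tgt = w := (hrep e heq).2
    have h3 : f (FP.ofVertex v) = FP.ofVertex w := by
      rw [hf.map_ofVertex, hfw]
    apply hvf
    show f (FP.ofVertex (G.tgt e)) = f (FP.ofVertex v)
    rw [h3]
    exact h1.trans (by rw [h2])
  have huniq : ∀ e e' : G.E, G.src e = v → G.src e' = v → e = e' := by
    have hpre : ∀ e e' : G.E, G.src e = v → G.src e' = v →
        (f (FP.ofEdge e)).edges.length ≤ (f (FP.ofEdge e')).edges.length → e = e' := by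
      intro e e' heq heq' hle
      apply hmf
      apply FP.le_of_prefix
      · exact hf.src_eq (by simp [heq, heq'])
      · show (f (FP.ofEdge e)).edges <+: (f (FP.ofEdge e')).edges
        rw [(hrep e heq).1, (hrep e' heq').1]
        exact ⟨List.replicate ((f (FP.ofEdge e')).edges.length -
          (f (FP.ofEdge e)).edges.length) ℓ, by
            rw [← List.replicate_add]; congr 1; omega⟩
    intro e e' heq heq'
    rcases le_total (f (FP.ofEdge e)).edges.length (f (FP.ofEdge e')).edges.length with hle | hle
    · exact hpre e e' heq heq' hle
    · exact (hpre e' e heq' heq hle).symm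
  obtain ⟨e, he⟩ := hv.2
  exact ⟨e, Set.eq_singleton_iff_unique_mem.2 ⟨he, fun x hx => huniq x e hx he⟩, htgt e he⟩

lemma key_aux (hg' : IsPathHom g) (hmg : EdgeMonotone g) (hrcf : RegCond f v) :
    ∀ (n : ℕ) (d d' c : H.FP) (h : c.tgt = d.src) (h' : c.tgt = d'.src),
      d.edges.length ≤ n → c.comp d h ∈ EdgeImg f v → c.comp d' h' ∈ EdgeImg f v →
      (g (c.comp d h)).edges <+: (g (c.comp d' h')).edges →
      c.comp d h = c.comp d' h' := by
  intro n
  induction n with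
  | zero =>
    intro d d' c h h' hn hm hm' hpre
    rcases FP.destruct d with ⟨he, hd, ht⟩ | ⟨x, r, hx, he, hd⟩
    · have hcd : c.comp d h = c := FP.ext' rfl (by rw [FP.comp_edges, he]; simp)
      rw [hcd] at hm ⊢
      have hd' := ((hrcf.2 c).1 hm).2.1 d' h' hm'
      subst hd'
      exact (FP.comp_ofVertex c).symm
    · rw [he] at hn; simp at hn
  | succ n ih =>
    intro d d' c h h' hn hm hm' hpre
    rcases FP.destruct d with ⟨he, hd, ht⟩ | ⟨x, r, hx, he, hd⟩
    · have hcd : c.comp d h = c := FP.ext' rfl (by rw [FP.comp_edges, he]; simp)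
      rw [hcd] at hm ⊢
      have hd' := ((hrcf.2 c).1 hm).2.1 d' h' hm'
      subst hd'
      exact (FP.comp_ofVertex c).symm
    · rcases FP.destruct d' with ⟨he', hd', ht'⟩ | ⟨x', r', hx', he', hd'⟩
      · have hcd' : c.comp d' h' = c := FP.ext' rfl (by rw [FP.comp_edges, he']; simp)
        rw [hcd'] at hm' ⊢
        have hdd := ((hrcf.2 c).1 hm').2.1 d h hm
        subst hdd
        exact FP.comp_ofVertex c
      · have h₁ : c.tgt = H.src x := by rw [h, hd]; rfl
        have h₁' : c.tgt = H.src x' := by rw [h', hd']; rfl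
        have hxr : (c.comp (FP.ofEdge x) h₁).tgt = r.src := hx
        have hxr' : (c.comp (FP.ofEdge x') h₁').tgt = r'.src := hx'
        have e1 : c.comp d h = (c.comp (FP.ofEdge x) h₁).comp r hxr :=
          FP.ext' rfl (by simp [FP.comp_edges, he]; rw [FP.comp_edges c (FP.ofEdge x) h₁]; simp)
        have e1' : c.comp d' h' = (c.comp (FP.ofEdge x') h₁').comp r' hxr' :=
          FP.ext' rfl (by simp [FP.comp_edges, he']; rw [FP.comp_edges c (FP.ofEdge x') h₁']; simp)
        have hsplit : (g (c.comp d h)).edges =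
            ((g c).edges ++ (g (FP.ofEdge x)).edges) ++ (g r).edges := by
          rw [e1]
          obtain ⟨hh2, hc2⟩ := hg'.map_comp (c.comp (FP.ofEdge x) h₁) r hxr
          rw [hc2, FP.comp_edges]
          obtain ⟨hh3, hc3⟩ := hg'.map_comp c (FP.ofEdge x) h₁
          rw [hc3, FP.comp_edges]
        have hsplit' : (g (c.comp d' h')).edges =
            ((g c).edges ++ (g (FP.ofEdge x')).edges) ++ (g r').edges := by
          rw [e1']
          obtain ⟨hh2, hc2⟩ := hg'.map_comp (c.comp (FP.ofEdge x') h₁') r' hxr'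
          rw [hc2, FP.comp_edges]
          obtain ⟨hh3, hc3⟩ := hg'.map_comp c (FP.ofEdge x') h₁'
          rw [hc3, FP.comp_edges]
        have hsrcxe : (FP.ofEdge x).src = (FP.ofEdge x').src := by
          show H.src x = H.src x'
          rw [← h₁, ← h₁']
        have hxx : x = x' := by
          have t1 : (g c).edges ++ (g (FP.ofEdge x)).edges <+: (g (c.comp d h)).edges := by
            rw [hsplit]; exact List.prefix_append _ _
          have t1' : (g c).edges ++ (g (FP.ofEdge x')).edges <+: (g (c.comp d' h')).edges := by
            rw [hsplit']; exact List.prefix_append _ _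
          have t2 := t1.trans hpre
          rcases List.prefix_or_prefix_of_prefix t2 t1' with hcase | hcase
          · exact hmg x x' (FP.le_of_prefix (hg'.src_eq hsrcxe)
              ((List.prefix_append_right_inj _).1 hcase))
          · exact (hmg x' x (FP.le_of_prefix (hg'.src_eq hsrcxe.symm)
              ((List.prefix_append_right_inj _).1 hcase))).symm
        subst hxx
        have hrn : r.edges.length ≤ n := by
          have := congrArg List.length he; simp at this; omega
        have hm2 : (c.comp (FP.ofEdge x) h₁).comp r hxr ∈ EdgeImg f v := e1 ▸ hm
        have hm2' : (c.comp (FP.ofEdge x) h₁').comp r' hxr' ∈ EdgeImg f v := e1' ▸ hm'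
        have hpre2 : (g ((c.comp (FP.ofEdge x) h₁).comp r hxr)).edges <+:
            (g ((c.comp (FP.ofEdge x) h₁').comp r' hxr')).edges := by
          rw [← e1, ← e1']; exact hpre
        have := ih r r' (c.comp (FP.ofEdge x) h₁) hxr (by exact hxr') hrn hm2
          (by exact hm2') (by exact hpre2)
        rw [e1, e1']
        exact this.trans (by rfl)

lemma key (hf : IsPathHom f) (hg' : IsPathHom g) (hmg : EdgeMonotone g) (hrcf : RegCond f v)
    {p p' : H.FP} (hp : p ∈ EdgeImg f v) (hp' : p' ∈ EdgeImg f v)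
    (hpre : (g p).edges <+: (g p').edges) : p = p' := by
  have hs : p.src = p'.src := (src_mem_edgeImg hf hp).trans (src_mem_edgeImg hf hp').symm
  have hcp : (FP.ofVertex p.src).comp p rfl = p := FP.ext' rfl ((FP.comp_edges _ _ _).trans (by simp))
  have h' : (FP.ofVertex p.src).tgt = p'.src := hs
  have hcp' : (FP.ofVertex p.src).comp p' h' = p' := FP.ext' hs (by simp [FP.comp_edges])
  have := key_aux hg' hmg hrcf p.edges.length p p' (FP.ofVertex p.src) rfl h' le_rfl
    (by rw [hcp]; exact hp) (by rw [hcp']; exact hp')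
    (by rw [hcp, hcp']; exact hpre)
  rw [hcp, hcp'] at this
  exact this

lemma comp3_aux (hf : IsPathHom f) (hg' : IsPathHom g) (hrg : RegularHom g) (hv : RegularV G v)
    (hrcf : RegCond f v) :
    ∀ (n : ℕ) (d c : H.FP) (h : c.tgt = d.src), d.edges.length ≤ n →
      c.comp d h ∈ EdgeImg f v →
      ∀ (t : ℕ) (ht : t < (g d).length) (y : K.E),
        K.src y = K.src ((g d).edges.get ⟨t, ht⟩) →
        ∃ p'' ∈ EdgeImg f v,
          (g c).edges ++ ((g d).edges.take t ++ [y]) <+: (g p'').edges := by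
  intro n
  induction n with
  | zero =>
    intro d c h hn hm t ht y hy
    have he : d.edges = [] := by
      cases hq : d.edges with
      | nil => rfl
      | cons a l => rw [hq] at hn; simp at hn
    obtain ⟨hd, -⟩ := FP.eq_ofVertex_of_length_zero (by simpa [FP.length] using he)
    rw [hd, hg'.map_ofVertex] at ht
    simp [FP.length] at ht
  | succ n ih =>
    intro d c h hn hm t ht y hy
    rcases FP.destruct d with ⟨he, hd, -⟩ | ⟨x, r, hxr0, he, hd⟩
    · rw [hd, hg'.map_ofVertex] at ht
      simp [FP.length] at ht
    · have h₁ : c.tgt = H.src x := by rw [h, hd]; rfl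
      have hsplit : (g d).edges = (g (FP.ofEdge x)).edges ++ (g r).edges := by
        rw [hd]
        obtain ⟨hh2, hc2⟩ := hg'.map_comp (FP.ofEdge x) r hxr0
        rw [hc2, FP.comp_edges]
      set m := (g (FP.ofEdge x)).edges.length with hmdef
      have hLd : (g d).length = m + (g r).edges.length := by
        rw [FP.length, hsplit, List.length_append]
      have hdlen : d.edges.length = r.edges.length + 1 := by rw [he]; simp
      have hi₀ : c.edges.length < (c.comp d h).length := by
        rw [FP.length, FP.comp_edges, List.length_append]; omega
      have hgeti : (c.comp d h).edges.get ⟨c.edges.length, hi₀⟩ = x := by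
        simp only [List.get_eq_getElem, FP.comp_edges]
        rw [List.getElem_append_right le_rfl]
        simp [he]
      by_cases hcase : t < m
      · have hwreg : RegularV H (H.src x) := by
          have := srcReg hv hrcf hm c.edges.length hi₀
          rwa [hgeti] at this
        have hgw : RegCond g (H.src x) :=
          gRegCond hg' hrg _ hwreg x rfl (by simp only [FP.length]; omega)
        have hmemx : g (FP.ofEdge x) ∈ EdgeImg g (H.src x) := mem_edgeImg.2 ⟨x, rfl, rfl⟩
        have ht' : t < (g (FP.ofEdge x)).length := by simp only [FP.length]; omega
        have hsrcy : K.src y = K.src ((g (FP.ofEdge x)).edges.get ⟨t, ht'⟩) := by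
          rw [hy]
          congr 1
          simp only [List.get_eq_getElem]
          rw [List.getElem_of_eq hsplit, List.getElem_append_left]
        obtain ⟨q', hq', hq'pre⟩ := ((hgw.2 _).1 hmemx).2.2 t ht' y hsrcy
        obtain ⟨x', hx'w, hq'eq⟩ := mem_edgeImg.1 hq'
        subst hq'eq
        have hcomp3 := ((hrcf.2 _).1 hm).2.2 c.edges.length hi₀ x' (by rw [hgeti]; exact hx'w)
        obtain ⟨p'', hp'', hpre2⟩ := hcomp3
        have htake : (c.comp d h).edges.take c.edges.length = c.edges := by
          rw [FP.comp_edges]; exact List.take_left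
        rw [htake] at hpre2
        have h₁' : c.tgt = H.src x' := h₁.trans hx'w.symm
        have hsrcp : (c.comp (FP.ofEdge x') h₁').src = p''.src := by
          rw [FP.comp_src c (FP.ofEdge x') h₁']
          have e1 : (c.comp d h).src = c.src := rfl
          rw [← e1]
          exact (src_mem_edgeImg hf hm).trans (src_mem_edgeImg hf hp'').symm
        have hedges : (c.comp (FP.ofEdge x') h₁').edges = c.edges ++ [x'] := by
          rw [FP.comp_edges c (FP.ofEdge x') h₁']; rfl
        obtain ⟨s', hs', hp''eq⟩ := FP.le_of_prefix hsrcp (by rw [hedges]; exact hpre2)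
        refine ⟨p'', hp'', ?_⟩
        have hsplitp : (g p'').edges =
            ((g c).edges ++ (g (FP.ofEdge x')).edges) ++ (g s').edges := by
          rw [hp''eq]
          obtain ⟨hh2, hc2⟩ := hg'.map_comp _ s' hs'
          rw [hc2, FP.comp_edges]
          obtain ⟨hh3, hc3⟩ := hg'.map_comp c (FP.ofEdge x') h₁'
          rw [hc3, FP.comp_edges]
        rw [hsplitp, List.append_assoc]
        rw [List.prefix_append_right_inj]
        have htake2 : (g d).edges.take t = (g (FP.ofEdge x)).edges.take t := by
          rw [hsplit, List.take_append,
            Nat.sub_eq_zero_of_le (le_of_lt hcase)]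
          simp
        rw [htake2]
        exact hq'pre.trans (List.prefix_append _ _)
      · push_neg at hcase
        have e1 : c.comp d h = (c.comp (FP.ofEdge x) h₁).comp r (by exact hxr0) :=
          FP.ext' rfl (by simp [FP.comp_edges, he]; rw [FP.comp_edges (c.comp (FP.ofEdge x) h₁) r hxr0, FP.comp_edges c (FP.ofEdge x) h₁]; simp)
        have hm2 : (c.comp (FP.ofEdge x) h₁).comp r (by exact hxr0) ∈ EdgeImg f v :=
          e1 ▸ hm
        have hrn : r.edges.length ≤ n := by omega
        have ht' : t - m < (g r).length := by
          simp only [FP.length] at ht ⊢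
          rw [hsplit, List.length_append] at ht
          omega
        have hsrcy : K.src y = K.src ((g r).edges.get ⟨t - m, ht'⟩) := by
          rw [hy]
          congr 1
          simp only [List.get_eq_getElem]
          rw [List.getElem_of_eq hsplit, List.getElem_append_right hcase]
        obtain ⟨p'', hp'', hpre3⟩ :=
          ih r (c.comp (FP.ofEdge x) h₁) (by exact hxr0) hrn hm2 (t - m) ht' y hsrcy
        refine ⟨p'', hp'', ?_⟩
        have hce : (g (c.comp (FP.ofEdge x) h₁)).edges =
            (g c).edges ++ (g (FP.ofEdge x)).edges := by
          obtain ⟨hh3, hc3⟩ := hg'.map_comp c (FP.ofEdge x) h₁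
          rw [hc3, FP.comp_edges]
        rw [hce] at hpre3
        have htake3 : (g d).edges.take t =
            (g (FP.ofEdge x)).edges ++ (g r).edges.take (t - m) := by
          rw [hsplit, List.take_append,
            List.take_of_length_le (by omega : (g (FP.ofEdge x)).edges.length ≤ t)]
        rw [htake3]
        simpa [List.append_assoc] using hpre3

lemma compose_regCond (hf : IsPathHom f) (hg' : IsPathHom g) (hmg : EdgeMonotone g)
    (hrg : RegularHom g) (hv : RegularV G v) (hrcf : RegCond f v)
    (hpos : ∀ p ∈ EdgeImg f v, 0 < (g p).length) : RegCond (g ∘ f) v := by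
  have himg : EdgeImg (g ∘ f) v = g '' EdgeImg f v := by
    ext P
    constructor
    · rintro ⟨e, he, rfl⟩
      exact ⟨f (FP.ofEdge e), ⟨e, he, rfl⟩, rfl⟩
    · rintro ⟨q, ⟨e, he, rfl⟩, rfl⟩
      exact ⟨e, he, rfl⟩
  rw [regCond_iff]
  constructor
  · intro e he e' he' heq
    simp only [Function.comp] at heq
    have h1 : f (FP.ofEdge e) = f (FP.ofEdge e') :=
      key hf hg' hmg hrcf (mem_edgeImg.2 ⟨e, he, rfl⟩) (mem_edgeImg.2 ⟨e', he', rfl⟩)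
        (by rw [heq])
    exact hrcf.1 he he' h1
  · intro P hP
    rw [himg] at hP
    obtain ⟨p, hp, rfl⟩ := hP
    refine ⟨hpos p hp, ?_, ?_⟩
    · intro q hq hmem
      rw [himg] at hmem
      obtain ⟨p', hp', heq⟩ := hmem
      have hpre : (g p).edges <+: (g p').edges := ⟨q.edges, by rw [heq, FP.comp_edges]⟩
      have hpp' : p = p' := key hf hg' hmg hrcf hp hp' hpre
      subst hpp'
      have hlen := congrArg FP.length heq
      rw [FP.comp_length] at hlen
      have hq0 : q.length = 0 := by omega
      obtain ⟨hqv, hqt⟩ := FP.eq_ofVertex_of_length_zero hq0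
      rw [hqv]
      congr 1
      exact hq.symm
    · intro i hi y hy
      have hcp : (FP.ofVertex p.src).comp p rfl = p := FP.ext' rfl ((FP.comp_edges _ _ _).trans (by simp))
      have hm : (FP.ofVertex p.src).comp p rfl ∈ EdgeImg f v := by rw [hcp]; exact hp
      obtain ⟨p'', hp'', hpre⟩ := comp3_aux hf hg' hrg hv hrcf p.edges.length p
        (FP.ofVertex p.src) rfl le_rfl hm i hi y hy
      refine ⟨g p'', by rw [himg]; exact ⟨p'', hp'', rfl⟩, ?_⟩
      have hemp : (g (FP.ofVertex p.src)).edges = [] := by rw [hg'.map_ofVertex]; rfl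
      rw [hemp] at hpre
      simpa using hpre

end Comp

end DirGraph

open DirGraph in
/-- Vertex-injective path homomorphisms satisfying both the monotonicity
condition on edges and the regularity condition form a subcategory: identities
are regular and the composite of regular, monotone, vertex-injective path
homomorphisms is regular. -/
theorem regular_morphisms_form_subcategory :
    (∀ G : DirGraph, RegularHom (id : G.FP → G.FP)) ∧
    (∀ (G H K : DirGraph) (f : G.FP → H.FP) (g : H.FP → K.FP),
      IsPathHom f → VertexInjective f → EdgeMonotone f → RegularHom f →
      IsPathHom g → VertexInjective g → EdgeMonotone g → RegularHom g →
      RegularHom (g ∘ f)) := by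
  constructor
  · exact regularHom_id
  · intro G H K f g hf hvf hmf hrf hg hvg hmg hrg
    intro v hv
    obtain ⟨hf1, hf2⟩ := hrf v hv
    have himg : EdgeImg (g ∘ f) v = g '' EdgeImg f v := by
      ext P
      constructor
      · rintro ⟨e, he, rfl⟩
        exact ⟨f (FP.ofEdge e), ⟨e, he, rfl⟩, rfl⟩
      · rintro ⟨q, ⟨e, he, rfl⟩, rfl⟩
        exact ⟨e, he, rfl⟩
    constructor
    · intro hnot0
      have hrcf := hf1 hnot0
      apply compose_regCond hf hg hmg hrg hv hrcf
      intro p hp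
      by_contra hle
      have h0 : (g p).length = 0 := by omega
      exact hnot0 (poslem hf hvf hmf hg hrg hv hrcf hp h0)
    · intro h0reg
      rcases hf2 h0reg with hrcf | hcol
      · obtain ⟨e₀, hset, hloop⟩ := h0reg
        have hS : EdgeImg f v = {f (FP.ofEdge e₀)} := by
          rw [EdgeImg, hset, Set.image_singleton]
        by_cases hlen : 0 < (g (f (FP.ofEdge e₀))).length
        · left
          apply compose_regCond hf hg hmg hrg hv hrcf
          intro p hp
          rw [hS, Set.mem_singleton_iff] at hp
          rw [hp]; exact hlen
        · right
          have h0' : (g (f (FP.ofEdge e₀))).length = 0 := by omega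
          have himg2 : EdgeImg (g ∘ f) v = {(g ∘ f) (FP.ofEdge e₀)} := by
            rw [EdgeImg, hset, Set.image_singleton]
          rw [himg2]
          have hsrc : G.src e₀ = v := by
            have : e₀ ∈ {x : G.E | G.src x = v} := by rw [hset]; rfl
            exact this
          have hmain : (g ∘ f) (FP.ofEdge e₀) = (g ∘ f) (FP.ofVertex v) := by
            obtain ⟨hqv, -⟩ := FP.eq_ofVertex_of_length_zero h0'
            have h1 : FP.ofVertex (g (f (FP.ofEdge e₀))).src
                = g (FP.ofVertex (f (FP.ofEdge e₀)).src) := (hg.src_map _).symm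
            have h2 : FP.ofVertex (f (FP.ofEdge e₀)).src
                = f (FP.ofVertex (FP.ofEdge e₀).src) := (hf.src_map _).symm
            calc (g ∘ f) (FP.ofEdge e₀) = FP.ofVertex (g (f (FP.ofEdge e₀))).src := hqv
              _ = g (FP.ofVertex (f (FP.ofEdge e₀)).src) := h1
              _ = g (f (FP.ofVertex (FP.ofEdge e₀).src)) := by rw [h2]
              _ = (g ∘ f) (FP.ofVertex v) := by
                    show g (f (FP.ofVertex (G.src e₀))) = g (f (FP.ofVertex v))
                    rw [hsrc]
          rw [hmain]
      · right
        rw [himg, hcol, Set.image_singleton]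
        rfl
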